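/- If $\phi:X\to(-\infty,+\infty]$ is approximately $\lambda$-convex, then for every $x\in X$ the metric slope equals the global $\lambda$-slope: $|\partial\phi|(x)=|\partial^\lambda\phi|(x)$. -/

import Mathlib

open Filter in
/-- The metric slope `|∂φ|(x)` of an extended-real functional. -/
noncomputable def metricSlope {X : Type*} [MetricSpace X] (φ : X → EReal) (x : X) : EReal :=
  if φ x = ⊤ then ⊤ else
    max 0 (Filter.limsup (fun y => (max (φ x - φ y) 0) / ((dist x y : ℝ) : EReal))
      (nhdsWithin x {x}ᶜ))

/-- The global `λ`-slope `|∂^λ φ|(x)`. -/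
noncomputable def globalSlope {X : Type*} [MetricSpace X] (φ : X → EReal) (lam : ℝ) (x : X) :
    EReal :=
  if φ x = ⊤ then ⊤ else
    max 0 (⨆ y ∈ {y : X | y ≠ x},
      (max (φ x - φ y + ((lam / 2 * dist x y ^ 2 : ℝ) : EReal)) 0) / ((dist x y : ℝ) : EReal))

/-- `x` is a `(θ, ε)`-intermediate point between `x₀` and `x₁`. -/
def IsIntermediatePt {X : Type*} [MetricSpace X] (x₀ x₁ x : X) (θ ε : ℝ) : Prop :=
  dist x₀ x ^ 2 / θ + dist x x₁ ^ 2 / (1 - θ) ≤ dist x₀ x₁ ^ 2 * (1 + ε ^ 2 * θ * (1 - θ))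

/-- `φ` is approximately `λ`-convex in `D`. -/
noncomputable def ApproxLambdaConvexOn {X : Type*} [MetricSpace X]
    (φ : X → EReal) (lam : ℝ) (D : Set X) : Prop :=
  ∀ x₀ ∈ D, ∀ x₁ ∈ D, φ x₀ ≠ ⊤ → φ x₁ ≠ ⊤ →
    ∀ θ ∈ Set.Ioo (0:ℝ) 1, ∀ ε ∈ Set.Ioo (0:ℝ) 1, ∃ x ∈ D,
      IsIntermediatePt x₀ x₁ x θ ε ∧
      φ x ≤ (((1 - θ : ℝ)) : EReal) * φ x₀ + ((θ : ℝ) : EReal) * φ x₁ -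
        (((lam - ε) / 2 * (θ * (1 - θ)) * dist x₀ x₁ ^ 2 : ℝ) : EReal)

open Filter Metric Set

lemma ereal_coe_max (a b : ℝ) : ((max a b : ℝ) : EReal) = max (a:EReal) (b:EReal) :=
  EReal.coe_strictMono.monotone.map_max

lemma ereal_le_of_forall_add {a b : EReal} (h : ∀ c : ℝ, 0 < c → a ≤ b + (c : EReal)) :
    a ≤ b := by
  rcases eq_or_ne b ⊤ with hb | hb
  · simp [hb]
  rcases eq_or_ne b ⊥ with hb' | hb'
  · simpa [hb'] using h 1 one_pos
  rw [← EReal.le_of_forall_lt_iff_le]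
  intro z hz
  set B : ℝ := b.toReal with hB_def
  have hB : (B : EReal) = b := EReal.coe_toReal hb hb'
  have hz' : B < z := by
    rw [← hB] at hz; exact_mod_cast hz
  have h2 : a ≤ ((B + (z - B) : ℝ) : EReal) := by
    rw [EReal.coe_add, hB]; exact h _ (by linarith)
  have e : B + (z - B) = z := by ring
  rwa [e] at h2


lemma interm_bounds (θ d a b : ℝ) (hθ1 : 0 < θ) (hθ2 : θ < 1/2) (hd : 0 < d)
    (ha0 : 0 ≤ a) (hb0 : 0 ≤ b) (htri1 : d ≤ a + b) (htri2 : b ≤ a + d)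
    (hIP : a^2/θ + b^2/(1-θ) ≤ d^2*(1+θ^2*θ*(1-θ))) :
    θ*d*(1-θ*(1-θ)) ≤ a ∧ a*(1-2*θ) ≤ θ*d*(1+θ) := by
  have h1θ : 0 < 1 - θ := by linarith
  have hint' : (1-θ)*a^2 + θ*b^2 ≤ θ*(1-θ)*(d^2*(1+θ^2*θ*(1-θ))) := by
    have e1 : θ*(1-θ)*(a^2/θ + b^2/(1-θ)) = (1-θ)*a^2 + θ*b^2 := by
      field_simp
    rw [← e1]
    exact mul_le_mul_of_nonneg_left hIP (by positivity)
  have hsq0 : d^2 ≤ (a+b)^2 := by nlinarith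
  have hsq : θ*(1-θ)*d^2 ≤ θ*(1-θ)*(a+b)^2 :=
    mul_le_mul_of_nonneg_left hsq0 (by positivity)
  have h5 : ((1-θ)*a - θ*b)^2 ≤ (θ^2*(1-θ)*d)^2 := by nlinarith [hint', hsq]
  have hcpos : 0 < θ^2*(1-θ)*d := by positivity
  have h6 : -(θ^2*(1-θ)*d) ≤ (1-θ)*a - θ*b := by
    nlinarith [h5, sq_nonneg (((1-θ)*a - θ*b) + θ^2*(1-θ)*d)]
  have h6' : (1-θ)*a - θ*b ≤ θ^2*(1-θ)*d := by
    nlinarith [h5, sq_nonneg (((1-θ)*a - θ*b) - θ^2*(1-θ)*d)]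
  constructor
  · nlinarith [h6, mul_le_mul_of_nonneg_left htri1 hθ1.le]
  · nlinarith [h6', mul_le_mul_of_nonneg_left htri2 hθ1.le,
      mul_pos (mul_pos (mul_pos hθ1 hθ1) hθ1) hd]

lemma za_bound (θ d a z K : ℝ) (hθ1 : 0 < θ) (hθ2 : θ < 1/2) (hz0 : 0 < z)
    (hG : z * (d * (1 + θ)) < K * (1 - 2*θ)) (ha_ub : a*(1-2*θ) ≤ θ*d*(1+θ)) :
    z * a ≤ θ * K := by
  have h12θ : (0:ℝ) < 1 - 2*θ := by linarith
  nlinarith [mul_le_mul_of_nonneg_left ha_ub hz0.le,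
    mul_le_mul_of_nonneg_left hG.le hθ1.le]

lemma K_pos (θ d z K : ℝ) (hθ1 : 0 < θ) (hθ2 : θ < 1/2) (hz0 : 0 < z) (hd : 0 < d)
    (hG : z * (d * (1 + θ)) < K * (1 - 2*θ)) : 0 < K := by
  nlinarith [mul_pos hz0 (mul_pos hd (by linarith : (0:ℝ) < 1+θ))]

lemma a_pos (θ d a : ℝ) (hθ1 : 0 < θ) (hθ2 : θ < 1/2) (hd : 0 < d)
    (h : θ*d*(1-θ*(1-θ)) ≤ a) : 0 < a := by
  have h1 : (0:ℝ) < 1 - θ*(1-θ) := by nlinarith [sq_nonneg (θ - 1/2)]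
  nlinarith [mul_pos (mul_pos hθ1 hd) h1]

lemma num_bound (θ lam p q s d : ℝ)
    (hsR : s ≤ (1-θ)*p + θ*q - (lam - θ)/2*(θ*(1-θ))*d^2) :
    θ * (p - q + (lam-θ)*(1-θ)*d^2/2) ≤ p - s := by nlinarith [hsR]

theorem stmt7 {X : Type*} [MetricSpace X] (φ : X → EReal) (lam : ℝ)
    (hbot : ∀ y, φ y ≠ ⊥)
    (hconv : ApproxLambdaConvexOn φ lam Set.univ) :
    ∀ x : X, metricSlope φ x = globalSlope φ lam x := by
  intro x
  by_cases hx : φ x = ⊤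
  · rw [metricSlope, globalSlope, if_pos hx, if_pos hx]
  rw [metricSlope, globalSlope, if_neg hx, if_neg hx]
  set p : ℝ := (φ x).toReal with hp_def
  have hp : φ x = (p : EReal) := (EReal.coe_toReal hx (hbot x)).symm
  set f : X → EReal := fun y => (max (φ x - φ y) 0) / ((dist x y : ℝ) : EReal) with hf
  set g : X → EReal := fun y =>
    (max (φ x - φ y + ((lam / 2 * dist x y ^ 2 : ℝ) : EReal)) 0) / ((dist x y : ℝ) : EReal)
    with hg
  set L := Filter.limsup f (nhdsWithin x {x}ᶜ) with hL
  set S := ⨆ y ∈ {y : X | y ≠ x}, g y with hS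
  -- Part A: each global quotient is at most the metric slope (uses convexity)
  have keyA : ∀ y : X, y ≠ x → g y ≤ max 0 L := by
    intro y hyx
    have hd : 0 < dist x y := dist_pos.2 (Ne.symm hyx)
    set d := dist x y with hd_def
    rcases eq_or_ne (φ y) ⊤ with hy | hy
    · have : g y = 0 := by
        show (max (φ x - φ y + _) 0) / _ = 0
        rw [hy, EReal.sub_top, EReal.bot_add, max_eq_right bot_le, EReal.zero_div]
      rw [this]; exact le_max_left _ _
    set q : ℝ := (φ y).toReal with hq_def
    have hq : φ y = (q : EReal) := (EReal.coe_toReal hy (hbot y)).symm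
    have hgy : g y = ((max (p - q + lam / 2 * d ^ 2) 0 / d : ℝ) : EReal) := by
      show (max (φ x - φ y + _) 0) / _ = _
      rw [hp, hq, ← EReal.coe_sub, ← EReal.coe_add, ← EReal.coe_zero, ← ereal_coe_max,
        ← EReal.coe_div]
    rcases le_or_gt (p - q + lam / 2 * d ^ 2) 0 with hle | hpos
    · rw [hgy, max_eq_right hle]
      simp
    · set r : ℝ := (p - q + lam / 2 * d ^ 2) / d with hr_def
      have hr : 0 < r := div_pos hpos hd
      have hrL : (r : EReal) ≤ L := by
        rw [← EReal.ge_of_forall_gt_iff_ge]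
        intro z hz
        have hzr : z < r := by exact_mod_cast hz
        apply le_limsup_of_frequently_le'
        rw [Filter.frequently_iff]
        intro U hU
        obtain ⟨δ, hδ, hUsub⟩ := Metric.mem_nhdsWithin_iff.1 hU
        -- choose θ small
        have hGtend : Tendsto (fun θ : ℝ =>
            (p - q + (lam - θ) * (1 - θ) * d ^ 2 / 2) * (1 - 2*θ) / (d * (1 + θ)))
            (nhdsWithin 0 (Set.Ioi 0)) (nhds r) := by
          have hcont : ContinuousAt (fun θ : ℝ =>
              (p - q + (lam - θ) * (1 - θ) * d ^ 2 / 2) * (1 - 2*θ) / (d * (1 + θ))) 0 := by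
            apply ContinuousAt.div
            · fun_prop
            · fun_prop
            · norm_num; exact hd.ne'
          have h0 := hcont.tendsto.mono_left (nhdsWithin_le_nhds (s := Set.Ioi (0:ℝ)))
          convert h0 using 2
          rw [hr_def]; ring
        have hBtend : Tendsto (fun θ : ℝ => θ * d * (1 + θ) / (1 - 2*θ))
            (nhdsWithin 0 (Set.Ioi 0)) (nhds 0) := by
          have hcont : ContinuousAt (fun θ : ℝ => θ * d * (1 + θ) / (1 - 2*θ)) 0 := by
            apply ContinuousAt.div
            · fun_prop
            · fun_prop
            · norm_num
          have h0 := hcont.tendsto.mono_left (nhdsWithin_le_nhds (s := Set.Ioi (0:ℝ)))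
          convert h0 using 2
          norm_num
        have hmem : ∀ᶠ θ : ℝ in nhdsWithin 0 (Set.Ioi 0), θ ∈ Set.Ioo (0:ℝ) (1/2) :=
          Filter.eventually_of_mem (Ioo_mem_nhdsGT_of_mem ⟨le_refl (0:ℝ), by norm_num⟩)
            (fun _ h => h)
        obtain ⟨θ, hθG, hθδ, hθ1, hθ2⟩ :=
          ((hGtend.eventually (eventually_gt_nhds hzr)).and
            ((hBtend.eventually (eventually_lt_nhds hδ)).and hmem)).exists
        obtain ⟨w, -, hint, hφw⟩ := hconv x (Set.mem_univ x) y (Set.mem_univ y) hx hy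
          θ ⟨hθ1, by linarith⟩ θ ⟨hθ1, by linarith⟩
        set a := dist x w with ha_def
        set b := dist w y with hb_def
        have htri1 : d ≤ a + b := dist_triangle x w y
        have htri2 : b ≤ a + d := by
          calc b ≤ dist w x + dist x y := dist_triangle w x y
          _ = a + d := by rw [dist_comm w x]
        have hIP : a^2/θ + b^2/(1-θ) ≤ d^2*(1+θ^2*θ*(1-θ)) := hint
        have h12θ : (0:ℝ) < 1 - 2*θ := by linarith
        obtain ⟨ha_lb, ha_ub⟩ := interm_bounds θ d a b hθ1 hθ2 hd dist_nonneg dist_nonneg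
          htri1 htri2 hIP
        have ha_pos : 0 < a := a_pos θ d a hθ1 hθ2 hd ha_lb
        have ha_δ : a < δ := by
          have h8 : a ≤ θ*d*(1+θ)/(1-2*θ) := (le_div_iff₀ h12θ).2 ha_ub
          linarith
        have hwx : w ≠ x := (dist_pos.1 ha_pos).symm
        have hwU : w ∈ U := hUsub ⟨by rw [mem_ball, dist_comm]; exact ha_δ, hwx⟩
        have hφw' : φ w ≤ (((1-θ)*p + θ*q - (lam - θ)/2*(θ*(1-θ))*d^2 : ℝ) : EReal) := by
          refine le_trans hφw ?_
          rw [hp, hq, ← EReal.coe_mul, ← EReal.coe_mul, ← EReal.coe_add, ← EReal.coe_sub]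
        have hwtop : φ w ≠ ⊤ := ne_top_of_le_ne_top (EReal.coe_ne_top _) hφw'
        set s : ℝ := (φ w).toReal with hs_def
        have hsw : φ w = (s : EReal) := (EReal.coe_toReal hwtop (hbot w)).symm
        have hsR : s ≤ (1-θ)*p + θ*q - (lam - θ)/2*(θ*(1-θ))*d^2 := by
          rw [hsw] at hφw'; exact_mod_cast hφw'
        have hfw : f w = ((max (p - s) 0 / a : ℝ) : EReal) := by
          show (max (φ x - φ w) 0) / _ = _
          rw [hp, hsw, ← EReal.coe_sub, ← EReal.coe_zero, ← ereal_coe_max, ← EReal.coe_div]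
        refine ⟨w, hwU, ?_⟩
        rw [hfw]
        rcases le_or_gt z 0 with hz0 | hz0
        · have h9 : (0:ℝ) ≤ max (p-s) 0 / a := by positivity
          exact_mod_cast hz0.trans h9
        · have hθG' : z < (p - q + (lam - θ) * (1 - θ) * d ^ 2 / 2) * (1 - 2*θ) / (d * (1 + θ)) :=
            hθG
          rw [lt_div_iff₀ (by positivity)] at hθG'
          have hza : z * a ≤ θ * (p - q + (lam-θ)*(1-θ)*d^2/2) :=
            za_bound θ d a z _ hθ1 hθ2 hz0 hθG' ha_ub
          have hnum : θ * (p - q + (lam-θ)*(1-θ)*d^2/2) ≤ p - s :=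
            num_bound θ lam p q s d hsR
          have h10 : z ≤ max (p-s) 0 / a := by
            rw [le_div_iff₀ ha_pos]
            calc z * a ≤ θ * (p - q + (lam-θ)*(1-θ)*d^2/2) := hza
            _ ≤ p - s := hnum
            _ ≤ max (p-s) 0 := le_max_left _ _
          exact_mod_cast h10
      rw [hgy, max_eq_left hpos.le]
      exact le_trans hrL (le_max_right 0 L)
  -- Part B: the metric slope is at most the global slope
  have keyB : L ≤ max 0 S := by
    apply ereal_le_of_forall_add
    intro c hc
    set δ : ℝ := 2 * c / (|lam| + 1) with hδ_def
    have hδ : 0 < δ := by positivity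
    apply Filter.limsup_le_of_le (by isBoundedDefault)
    rw [Filter.eventually_iff, Metric.mem_nhdsWithin_iff]
    refine ⟨δ, hδ, fun y hy => ?_⟩
    simp only [Set.mem_setOf_eq]
    obtain ⟨hyb, hyx⟩ := hy
    have hyx' : y ≠ x := hyx
    have hd : 0 < dist x y := dist_pos.2 (Ne.symm hyx')
    set d := dist x y with hd_def
    have hdδ : d < δ := by rw [hd_def, dist_comm]; exact mem_ball.1 hyb
    rcases eq_or_ne (φ y) ⊤ with hytop | hytop
    · have h0 : f y = 0 := by
        show (max (φ x - φ y) 0) / _ = 0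
        rw [hytop, EReal.sub_top, max_eq_right bot_le, EReal.zero_div]
      rw [h0]
      exact add_nonneg (le_max_left _ _) (by exact_mod_cast hc.le)
    set q : ℝ := (φ y).toReal with hq_def
    have hq : φ y = (q : EReal) := (EReal.coe_toReal hytop (hbot y)).symm
    have hfy : f y = ((max (p - q) 0 / d : ℝ) : EReal) := by
      show (max (φ x - φ y) 0) / _ = _
      rw [hp, hq, ← EReal.coe_sub, ← EReal.coe_zero, ← ereal_coe_max, ← EReal.coe_div]
    have hgy : g y = ((max (p - q + lam / 2 * d ^ 2) 0 / d : ℝ) : EReal) := by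
      show (max (φ x - φ y + _) 0) / _ = _
      rw [hp, hq, ← EReal.coe_sub, ← EReal.coe_add, ← EReal.coe_zero, ← ereal_coe_max,
        ← EReal.coe_div]
    have hdδ' : d * (|lam| + 1) < 2 * c := by
      rw [hδ_def, lt_div_iff₀ (by positivity)] at hdδ; linarith [hdδ]
    have h1 : max (p - q) 0 ≤ max (p - q + lam / 2 * d ^ 2) 0 + c * d := by
      rcases le_total (p - q) 0 with h | h
      · rw [max_eq_right h]
        exact add_nonneg (le_max_right _ _) (by positivity)
      · rw [max_eq_left h]
        have h2 : p - q ≤ (p - q + lam / 2 * d ^ 2) + |lam| / 2 * d ^ 2 := by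
          nlinarith [neg_abs_le lam, sq_nonneg d]
        have h3 : |lam| / 2 * d ^ 2 ≤ c * d := by
          nlinarith [mul_lt_mul_of_pos_left hdδ' hd, sq_nonneg d, abs_nonneg lam]
        calc p - q ≤ (p - q + lam / 2 * d ^ 2) + |lam| / 2 * d ^ 2 := h2
        _ ≤ max (p - q + lam / 2 * d ^ 2) 0 + c * d := by
            have := le_max_left (p - q + lam / 2 * d ^ 2) 0
            linarith
    have h4 : max (p - q) 0 / d ≤ max (p - q + lam / 2 * d ^ 2) 0 / d + c := by
      rw [div_add' _ _ _ hd.ne']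
      gcongr
    have h5 : g y ≤ S := by
      rw [hS]
      exact le_biSup g hyx'
    calc f y = ((max (p - q) 0 / d : ℝ) : EReal) := hfy
    _ ≤ ((max (p - q + lam / 2 * d ^ 2) 0 / d + c : ℝ) : EReal) := by exact_mod_cast h4
    _ = g y + (c : EReal) := by rw [EReal.coe_add, hgy]
    _ ≤ max 0 S + (c : EReal) := add_le_add (h5.trans (le_max_right 0 S)) le_rfl
  apply le_antisymm
  · exact max_le (le_max_left _ _) keyB
  · exact max_le (le_max_left _ _) (iSup₂_le fun y hy => keyA y hy)
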